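/- Let A be a unital C*-algebra and x_1,...,x_{n+j} (j >= 0) self-adjoint elements of A with C*(x_1,...,x_{n+j}) an MF algebra. If K_top^(2)(x_1,...,x_n : x_1,...,x_{n+j}) = 0, then K_top^(2)(x_1,...,x_{n-1} : x_1,...,x_{n+j}) = 0. -/

import Mathlib

noncomputable section

open Filter Set
open scoped BigOperators ComplexOrder

namespace OrbitDim

/-- `k × k` complex matrices. -/
abbrev Mat (k : ℕ) := Matrix (Fin k) (Fin k) ℂ

/-- The operator norm of a complex matrix, i.e. the norm of the operator it induces
on the euclidean space `ℂ^k`. -/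
def opNorm {k : ℕ} (M : Mat k) : ℝ := ‖Matrix.toEuclideanCLM (𝕜 := ℂ) M‖

/-- The square of the normalized Hilbert–Schmidt norm `‖M‖₂² = τ_k(M*M)`. -/
def hsNormSq {k : ℕ} (M : Mat k) : ℝ := (k : ℝ)⁻¹ * ∑ s, ∑ t, ‖M s t‖ ^ 2

/-- The normalized Hilbert–Schmidt norm `‖M‖₂ = τ_k(M*M)^{1/2}`. -/
def hsNorm {k : ℕ} (M : Mat k) : ℝ := Real.sqrt (hsNormSq M)

/-- `‖·‖₂` of a tuple of matrices. -/
def tupleHS {ι : Type*} [Fintype ι] {k : ℕ} (T : ι → Mat k) : ℝ :=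
  Real.sqrt (∑ i, hsNormSq (T i))

/-- The normalized trace `τ_k = (1/k) Tr`. -/
def normalizedTrace {k : ℕ} (M : Mat k) : ℂ := (k : ℂ)⁻¹ * Matrix.trace M

/-- Noncommutative *-polynomials in variables indexed by `ι`: elements of the free
`ℂ`-algebra on `ι ⊕ ι`, the second copy of `ι` standing for the starred variables. -/
abbrev StarPoly (ι : Type*) := FreeAlgebra ℂ (ι ⊕ ι)

/-- Evaluation of a *-polynomial at a tuple `x`, the second copy of the variables being
evaluated at `star (x i)`. -/
def evalPoly {ι : Type*} {B : Type*} [Ring B] [Algebra ℂ B] [Star B]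
    (P : StarPoly ι) (x : ι → B) : B :=
  FreeAlgebra.lift ℂ (Sum.elim x fun i => star (x i)) P

/-- The `ω`-orbit-`‖·‖₂`-ball centered at a tuple `B` of `k × k` matrices. -/
def orbitBall {ι : Type*} [Fintype ι] {k : ℕ} (B : ι → Mat k) (ω : ℝ) :
    Set (ι → Mat k) :=
  {T | ∃ W : Mat k, W ∈ unitary (Mat k) ∧
    tupleHS (fun i => T i - W * B i * star W) < ω}

/-- The covering number `o₂(S, ω)`: the minimal number of `ω`-orbit-`‖·‖₂`-balls with
centers in `S` needed to cover `S` (`⊤` if there is no finite such cover). -/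
def o2 {ι : Type*} [Fintype ι] {k : ℕ} (S : Set (ι → Mat k)) (ω : ℝ) : ℕ∞ :=
  sInf {n : ℕ∞ | ∃ F : Finset (ι → Mat k),
    ↑F ⊆ S ∧ S ⊆ (⋃ B ∈ F, orbitBall B ω) ∧ n = (F.card : ℕ∞)}

/-- Logarithm of an extended natural number, valued in the extended reals. -/
def elog (n : ℕ∞) : EReal :=
  WithTop.recTopCoe ⊤ (fun m : ℕ => ((Real.log m : ℝ) : EReal)) n

/-- The convention `∞ ⬝ 0 = 0` and `∞ ⬝ t = ∞` for `t > 0`. -/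
def infMul (x : EReal) : EReal := if x = 0 then 0 else ⊤

variable {A : Type*} [CStarAlgebra A]

/-- Voiculescu's norm-microstate space `Γ_R^{top}(x₁,…,xₙ; k, ε, P₁,…,P_r)`:
self-adjoint `k × k` matrices `T i` of operator norm at most `R` such that
`| ‖P_j(T)‖ - ‖P_j(x)‖ | ≤ ε` for each `j`. -/
def Gamma {ι : Type*} [Fintype ι] (x : ι → A) (R : ℝ) (k : ℕ) (ε : ℝ)
    {r : ℕ} (P : Fin r → StarPoly ι) : Set (ι → Mat k) :=
  {T | (∀ i, IsSelfAdjoint (T i)) ∧ (∀ i, opNorm (T i) ≤ R) ∧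
    ∀ j, |opNorm (evalPoly (P j) T) - ‖evalPoly (P j) x‖| ≤ ε}

/-- Norm-microstate space of `x` in the presence of `y`: the projection onto the first
coordinates of the microstate space of the joint tuple. -/
def GammaRel {ι κ : Type*} [Fintype ι] [Fintype κ] (x : ι → A) (y : κ → A)
    (R : ℝ) (k : ℕ) (ε : ℝ) {r : ℕ} (P : Fin r → StarPoly (ι ⊕ κ)) :
    Set (ι → Mat k) :=
  (fun T : ι ⊕ κ → Mat k => T ∘ Sum.inl) '' Gamma (Sum.elim x y) R k ε P

/-- Topological orbit dimension `K_top^{(2)}(x : y)` of a (self-adjoint) tuple `x`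
in the presence of `y`. -/
def Ktop2sa {ι κ : Type*} [Fintype ι] [Fintype κ] (x : ι → A) (y : κ → A) : EReal :=
  ⨆ (ω : ℝ) (_ : 0 < ω) (R : ℝ) (_ : 0 < R),
    ⨅ (ε : ℝ) (_ : 0 < ε) (r : ℕ) (P : Fin r → StarPoly (ι ⊕ κ)),
      limsup (fun k : ℕ =>
        elog (o2 (GammaRel x y R k ε P) ω) * ((((k : ℝ) ^ 2)⁻¹ : ℝ) : EReal)) atTop

/-- The tuple of real and imaginary parts of a tuple of elements. -/
def reim {ι : Type*} (x : ι → A) : ι ⊕ ι → A :=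
  Sum.elim (fun i => (2⁻¹ : ℂ) • (x i + star (x i)))
    (fun i => ((2 * Complex.I)⁻¹ : ℂ) • (x i - star (x i)))

/-- Topological orbit dimension `K_top^{(2)}(x : y)` for arbitrary tuples, obtained by
applying the self-adjoint version to the real and imaginary parts. -/
def Ktop2 {ι κ : Type*} [Fintype ι] [Fintype κ] (x : ι → A) (y : κ → A) : EReal :=
  Ktop2sa (reim x) (reim y)

/-- `K_top^{(3)}(G)` for a subset `G` of a C*-algebra. -/
def Ktop3 (G : Set A) : EReal :=
  ⨆ (n : ℕ) (x : Fin n → A) (_ : ∀ i, x i ∈ G),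
    ⨅ (t : ℕ) (y : Fin t → A) (_ : ∀ j, y j ∈ G), infMul (Ktop2 x y)

/-- The C*-subalgebra generated by a subset: the topological closure of the star
subalgebra generated by it. -/
def cstar (s : Set A) : StarSubalgebra ℂ A :=
  (StarAlgebra.adjoin ℂ s).topologicalClosure

/-- The tuple `x` admits matricial microstates: there are matrices realizing the norms of
all *-polynomials in `x` asymptotically; i.e. `C*(x)` is an MF algebra. -/
def IsMFTuple {ι : Type*} [Fintype ι] (x : ι → A) : Prop :=
  ∃ (m : ℕ → ℕ) (T : ∀ k, ι → Mat (m k)), (∀ k, 0 < m k) ∧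
    ∀ Q : StarPoly ι,
      Tendsto (fun k => opNorm (evalPoly Q (T k))) atTop (nhds ‖evalPoly Q x‖)

/-- A unital C*-algebra is MF if it admits a unital isometric embedding into
`∏ₖ M_{m_k}(ℂ) / ∑ₖ M_{m_k}(ℂ)`, expressed here by an asymptotically multiplicative,
asymptotically star-linear, asymptotically unital family of maps into matrices which is
isometric with respect to the quotient (limsup) norm. -/
def IsMF (A : Type*) [CStarAlgebra A] : Prop :=
  ∃ (m : ℕ → ℕ) (Φ : A → ∀ k, Mat (m k)),
    (∀ k, 0 < m k) ∧
    (∀ a b : A, Tendsto (fun k => opNorm (Φ (a + b) k - Φ a k - Φ b k)) atTop (nhds 0)) ∧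
    (∀ a b : A, Tendsto (fun k => opNorm (Φ (a * b) k - Φ a k * Φ b k)) atTop (nhds 0)) ∧
    (∀ (c : ℂ) (a : A), Tendsto (fun k => opNorm (Φ (c • a) k - c • Φ a k)) atTop (nhds 0)) ∧
    (∀ a : A, Tendsto (fun k => opNorm (Φ (star a) k - star (Φ a k))) atTop (nhds 0)) ∧
    Tendsto (fun k => opNorm (Φ 1 k - 1)) atTop (nhds 0) ∧
    ∀ a : A, limsup (fun k => opNorm (Φ a k)) atTop = ‖a‖

/-- A tracial state on a unital C*-algebra: a positive unital linear functional which is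
tracial. -/
def IsTracialState (τ : A → ℂ) : Prop :=
  (∀ a b : A, τ (a + b) = τ a + τ b) ∧ (∀ (c : ℂ) (a : A), τ (c • a) = c * τ a) ∧
  τ 1 = 1 ∧ (∀ a : A, 0 ≤ τ (star a * a)) ∧ ∀ a b : A, τ (a * b) = τ (b * a)

/-- An MF-trace (with respect to the generating tuple `x`): a tracial state which is a
limit of normalized matrix traces along microstates realizing the norms of all
*-polynomials in `x`. -/
def IsMFTrace {ι : Type*} [Fintype ι] (x : ι → A) (τ : A → ℂ) : Prop :=
  IsTracialState τ ∧
  ∃ (m : ℕ → ℕ) (T : ∀ k, ι → Mat (m k)), (∀ k, 0 < m k) ∧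
    (∀ Q : StarPoly ι,
      Tendsto (fun k => opNorm (evalPoly Q (T k))) atTop (nhds ‖evalPoly Q x‖)) ∧
    (∀ Q : StarPoly ι,
      Tendsto (fun k => normalizedTrace (evalPoly Q (T k))) atTop (nhds (τ (evalPoly Q x))))

/-- The product of the letters of a word. -/
def wordProd {M : Type*} [Monoid M] {ι : Type*} {q : ℕ} (x : ι → M) (w : Fin q → ι) : M :=
  (List.ofFn fun j => x (w j)).prod

/-- Tracial microstate space `Γ_R(x; m, k, ε; τ)`: self-adjoint matrices of norm at most
`R` whose normalized trace on every word of length at most `m` is `ε`-close to `τ` on the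
corresponding word in `x`. -/
def GammaTr {ι : Type*} [Fintype ι] (x : ι → A) (τ : A → ℂ) (R : ℝ) (m k : ℕ) (ε : ℝ) :
    Set (ι → Mat k) :=
  {T | (∀ i, IsSelfAdjoint (T i)) ∧ (∀ i, opNorm (T i) ≤ R) ∧
    ∀ q : ℕ, 1 ≤ q → q ≤ m → ∀ w : Fin q → ι,
      ‖normalizedTrace (wordProd T w) - τ (wordProd x w)‖ < ε}

/-- Tracial microstate space of `x` in the presence of `y`. -/
def GammaTrRel {ι κ : Type*} [Fintype ι] [Fintype κ] (x : ι → A) (y : κ → A) (τ : A → ℂ)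
    (R : ℝ) (m k : ℕ) (ε : ℝ) : Set (ι → Mat k) :=
  (fun T : ι ⊕ κ → Mat k => T ∘ Sum.inl) '' GammaTr (Sum.elim x y) τ R m k ε

/-- The modified free orbit dimension `K₂^{(2)}(x : y; τ)` of a (self-adjoint) tuple. -/
def K22sa {ι κ : Type*} [Fintype ι] [Fintype κ] (x : ι → A) (y : κ → A) (τ : A → ℂ) :
    EReal :=
  limsup (fun ω : ℝ =>
      ⨆ (R : ℝ) (_ : 0 < R), ⨅ (m : ℕ) (ε : ℝ) (_ : 0 < ε),
        limsup (fun k : ℕ =>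
          elog (o2 (GammaTrRel x y τ R m k ε) ω) * ((((k : ℝ) ^ 2)⁻¹ : ℝ) : EReal)) atTop)
    (nhdsWithin (0 : ℝ) (Ioi 0))

/-- The modified free orbit dimension for arbitrary tuples, via real and imaginary
parts. -/
def K22 {ι κ : Type*} [Fintype ι] [Fintype κ] (x : ι → A) (y : κ → A) (τ : A → ℂ) :
    EReal :=
  K22sa (reim x) (reim y) τ

/-- `K₃^{(3)}(G : τ)`. -/
def K33 (G : Set A) (τ : A → ℂ) : EReal :=
  ⨆ (n : ℕ) (x : Fin n → A) (_ : ∀ i, x i ∈ G),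
    ⨅ (t : ℕ) (y : Fin t → A) (_ : ∀ j, y j ∈ G), infMul (K22 x y τ)

/-- A (possibly non-unital) *-algebra has no finite-dimensional representations if the
only *-homomorphism from it into a matrix algebra is zero. -/
def HasNoFinDimRep (B : Type*) [NonUnitalNonAssocSemiring B] [Module ℂ B] [Star B] : Prop :=
  ∀ (k : ℕ) (φ : B →⋆ₙₐ[ℂ] Mat k) (b : B), φ b = 0

end OrbitDim

namespace OrbitDim

variable {A : Type*} [CStarAlgebra A]

lemma elog_nonneg (n : ℕ∞) : 0 ≤ elog n := by
  cases n with
  | top => exact le_top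
  | coe m =>
    show (0 : EReal) ≤ ((Real.log m : ℝ) : EReal)
    rcases Nat.eq_zero_or_pos m with hm | hm
    · simp [hm]
    · exact_mod_cast Real.log_nonneg (by exact_mod_cast hm)

lemma elog_mono {m n : ℕ∞} (h : m ≤ n) : elog m ≤ elog n := by
  cases n with
  | top => exact le_top
  | coe n' =>
    cases m with
    | top => simp at h
    | coe m' =>
      show ((Real.log m' : ℝ) : EReal) ≤ ((Real.log n' : ℝ) : EReal)
      have h' : m' ≤ n' := by exact_mod_cast h
      rcases Nat.eq_zero_or_pos m' with hm | hm
      · have := elog_nonneg (n' : ℕ∞)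
        simp only [hm, Nat.cast_zero, Real.log_zero] at *
        exact this
      · exact_mod_cast Real.log_le_log (by exact_mod_cast hm) (by exact_mod_cast h')

lemma hsNormSq_nonneg {k : ℕ} (M : Mat k) : 0 ≤ hsNormSq M := by
  unfold hsNormSq
  positivity

lemma hsNormSq_eq_re_trace {k : ℕ} (M : Mat k) :
    hsNormSq M = (k : ℝ)⁻¹ * Complex.re (Matrix.trace (star M * M)) := by
  unfold hsNormSq
  congr 1
  rw [Matrix.trace]
  simp only [Matrix.diag, Matrix.mul_apply, Matrix.star_apply]
  rw [Complex.re_sum]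
  rw [Finset.sum_comm]
  congr 1; ext s
  rw [Complex.re_sum]
  congr 1; ext t
  show ‖M t s‖ ^ 2 = (star (M t s) * M t s).re
  rw [Complex.star_def, mul_comm, Complex.mul_conj]
  simp [Complex.sq_norm]


lemma hsNormSq_unitary_conj {k : ℕ} {W : Mat k} (hW : W ∈ unitary (Mat k)) (M : Mat k) :
    hsNormSq (W * M * star W) = hsNormSq M := by
  rw [hsNormSq_eq_re_trace, hsNormSq_eq_re_trace]
  congr 2
  have h1 : star W * W = 1 := hW.1
  have h2 : W * star W = 1 := hW.2
  have : star (W * M * star W) * (W * M * star W) = W * (star M * M) * star W := by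
    simp only [star_mul, star_star]
    calc (W * (star M * star W)) * (W * M * star W)
        = W * star M * (star W * W) * M * star W := by noncomm_ring
      _ = W * (star M * M) * star W := by rw [h1]; noncomm_ring
  rw [this, Matrix.trace_mul_cycle, ← mul_assoc, h1, one_mul]

lemma hsNormSq_neg {k : ℕ} (M : Mat k) : hsNormSq (-M) = hsNormSq M := by
  unfold hsNormSq; simp

lemma tupleHS_unitary_conj {ι : Type*} [Fintype ι] {k : ℕ} {W : Mat k}
    (hW : W ∈ unitary (Mat k)) (T : ι → Mat k) :
    tupleHS (fun i => W * T i * star W) = tupleHS T := by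
  unfold tupleHS
  congr 1
  exact Finset.sum_congr rfl fun i _ => hsNormSq_unitary_conj hW (T i)

lemma tupleHS_neg {ι : Type*} [Fintype ι] {k : ℕ} (T : ι → Mat k) :
    tupleHS (fun i => -(T i)) = tupleHS T := by
  unfold tupleHS
  congr 1
  exact Finset.sum_congr rfl fun i _ => hsNormSq_neg (T i)

lemma tupleHS_add_le {ι : Type*} [Fintype ι] {k : ℕ} (X Y : ι → Mat k) :
    tupleHS (fun i => X i + Y i) ≤ tupleHS X + tupleHS Y := by
  set F : (ι → Mat k) → EuclideanSpace ℂ (ι × Fin k × Fin k) :=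
    fun Z => WithLp.toLp 2 (fun p : ι × Fin k × Fin k => Z p.1 p.2.1 p.2.2) with hF
  have key : ∀ Z : ι → Mat k, tupleHS Z = Real.sqrt (k : ℝ)⁻¹ * ‖F Z‖ := by
    intro Z
    rw [EuclideanSpace.norm_eq, ← Real.sqrt_mul (by positivity)]
    unfold tupleHS hsNormSq
    congr 1
    rw [Finset.mul_sum, Fintype.sum_prod_type]
    refine Finset.sum_congr rfl fun i _ => ?_
    simp only [Finset.mul_sum]
    rw [show (∑ x : Fin k × Fin k, (↑k : ℝ)⁻¹ * ‖F Z (i, x)‖ ^ 2)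
        = ∑ s : Fin k, ∑ t : Fin k, (↑k : ℝ)⁻¹ * ‖F Z (i, (s, t))‖ ^ 2
      from Fintype.sum_prod_type _]
  rw [key, key, key, ← mul_add]
  apply mul_le_mul_of_nonneg_left _ (Real.sqrt_nonneg _)
  have : F (fun i => X i + Y i) = F X + F Y := rfl
  rw [this]
  exact norm_add_le _ _


/-- Orbit-pseudometric triangle inequality through a common center. -/
lemma orbitBall_trans {ι : Type*} [Fintype ι] {k : ℕ} {c p T : ι → Mat k} {ω₁ ω₂ : ℝ}
    (h1 : T ∈ orbitBall c ω₁) (h2 : p ∈ orbitBall c ω₂) : T ∈ orbitBall p (ω₁ + ω₂) := by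
  obtain ⟨W₁, hW₁, hd₁⟩ := h1
  obtain ⟨W₂, hW₂, hd₂⟩ := h2
  refine ⟨W₁ * star W₂, mul_mem hW₁ (Unitary.star_mem hW₂), ?_⟩
  set W : Mat k := W₁ * star W₂ with hW
  have hWu : W ∈ unitary (Mat k) := mul_mem hW₁ (Unitary.star_mem hW₂)
  have split : ∀ i, T i - W * p i * star W =
      (T i - W₁ * c i * star W₁) + (W * (W₂ * c i * star W₂ - p i) * star W) := by
    intro i
    have h2' : star W₂ * W₂ = 1 := hW₂.1
    have : W * (W₂ * c i * star W₂) * star W = W₁ * c i * star W₁ := by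
      rw [hW]
      calc (W₁ * star W₂) * (W₂ * c i * star W₂) * star (W₁ * star W₂)
          = W₁ * (star W₂ * W₂) * c i * (star W₂ * W₂) * star W₁ := by
            simp only [star_mul, star_star]; noncomm_ring
        _ = W₁ * c i * star W₁ := by rw [h2']; noncomm_ring
    rw [mul_sub, sub_mul, this]
    abel
  calc tupleHS (fun i => T i - W * p i * star W)
      = tupleHS (fun i => (T i - W₁ * c i * star W₁)
          + (W * (W₂ * c i * star W₂ - p i) * star W)) := by
        exact congrArg tupleHS (funext split)
    _ ≤ tupleHS (fun i => T i - W₁ * c i * star W₁)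
          + tupleHS (fun i => W * (W₂ * c i * star W₂ - p i) * star W) :=
        tupleHS_add_le _ _
    _ = tupleHS (fun i => T i - W₁ * c i * star W₁)
          + tupleHS (fun i => W₂ * c i * star W₂ - p i) := by
        rw [tupleHS_unitary_conj hWu]
    _ = tupleHS (fun i => T i - W₁ * c i * star W₁)
          + tupleHS (fun i => p i - W₂ * c i * star W₂) := by
        rw [show (fun i => W₂ * c i * star W₂ - p i)
            = fun i => -(p i - W₂ * c i * star W₂) from funext fun i => (neg_sub _ _).symm]
        rw [tupleHS_neg]
    _ < ω₁ + ω₂ := add_lt_add hd₁ hd₂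

/-- Projection (along an injection of index sets) contracts the orbit pseudometric. -/
lemma tupleHS_comp_le {ι₁ ι₂ : Type*} [Fintype ι₁] [Fintype ι₂]
    [DecidableEq ι₂] {k : ℕ} (e : ι₁ → ι₂) (he : Function.Injective e) (X : ι₂ → Mat k) :
    tupleHS (X ∘ e) ≤ tupleHS X := by
  unfold tupleHS
  apply Real.sqrt_le_sqrt
  calc ∑ i, hsNormSq ((X ∘ e) i) = ∑ i ∈ Finset.univ.image e, hsNormSq (X i) := by
        rw [Finset.sum_image (fun a _ b _ h => he h)]; rfl
    _ ≤ ∑ i, hsNormSq (X i) :=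
        Finset.sum_le_sum_of_subset_of_nonneg (Finset.subset_univ _)
          (fun i _ _ => hsNormSq_nonneg (X i))


open scoped Classical in
/-- Covering-number comparison: if `S'` is contained in the image of `S` under the
coordinate projection along an injection `e`, then the `(ω+ω)`-covering number of `S'`
is at most the `ω`-covering number of `S`. -/
lemma o2_proj_le {ι₁ ι₂ : Type*} [Fintype ι₁] [Fintype ι₂] [DecidableEq ι₂] {k : ℕ}
    (e : ι₁ → ι₂) (he : Function.Injective e)
    {S : Set (ι₂ → Mat k)} {S' : Set (ι₁ → Mat k)}
    (hS : S' ⊆ (fun T => T ∘ e) '' S) (ω : ℝ) :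
    o2 S' (ω + ω) ≤ o2 S ω := by
  apply sInf_le_sInf_of_isCoinitialFor
  rintro n ⟨F, hFS, hcov, rfl⟩
  set pick : (ι₂ → Mat k) → (ι₁ → Mat k) := fun B =>
    if h : (orbitBall (B ∘ e) ω ∩ S').Nonempty then h.choose else fun _ => 0 with hpick
  set F' : Finset (ι₁ → Mat k) :=
    (F.filter (fun B => (orbitBall (B ∘ e) ω ∩ S').Nonempty)).image pick with hF'
  have hpick_mem : ∀ B ∈ F.filter (fun B => (orbitBall (B ∘ e) ω ∩ S').Nonempty),
      pick B ∈ orbitBall (B ∘ e) ω ∩ S' := by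
    intro B hB
    have h := (Finset.mem_filter.mp hB).2
    rw [hpick]
    simp only [dif_pos h]
    exact h.choose_spec
  refine ⟨F'.card, ⟨F', ?_, ?_, rfl⟩, ?_⟩
  · -- F' ⊆ S'
    intro p hp
    obtain ⟨B, hB, rfl⟩ := Finset.mem_image.mp hp
    exact (hpick_mem B hB).2
  · -- S' covered
    intro T' hT'
    obtain ⟨T, hT, hTe⟩ := hS hT'
    obtain ⟨B, hB, W, hW, hd⟩ := by
      have := hcov hT
      simp only [Set.mem_iUnion] at this
      exact this
    have hT'ball : T' ∈ orbitBall (B ∘ e) ω := by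
      refine ⟨W, hW, ?_⟩
      have : (fun i => T' i - W * (B ∘ e) i * star W)
          = (fun i₂ => T i₂ - W * B i₂ * star W) ∘ e := by
        funext i; simp [← hTe]
      rw [this]
      exact lt_of_le_of_lt (tupleHS_comp_le e he _) hd
    have hne : (orbitBall (B ∘ e) ω ∩ S').Nonempty := ⟨T', hT'ball, hT'⟩
    have hBf : B ∈ F.filter (fun B => (orbitBall (B ∘ e) ω ∩ S').Nonempty) :=
      Finset.mem_filter.mpr ⟨hB, hne⟩
    have hp := hpick_mem B hBf
    simp only [Set.mem_iUnion]
    exact ⟨pick B, Finset.mem_image_of_mem pick hBf, orbitBall_trans hT'ball hp.1⟩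
  · -- cardinality
    have : F'.card ≤ F.card :=
      le_trans (Finset.card_image_le) (Finset.card_filter_le _ _)
    exact_mod_cast this


/-- Renaming of variables in a *-polynomial. -/
def renameP {ι₁ ι₂ : Type*} (f : ι₁ → ι₂) : StarPoly ι₁ →ₐ[ℂ] StarPoly ι₂ :=
  FreeAlgebra.lift ℂ (fun v => FreeAlgebra.ι ℂ (Sum.map f f v))

lemma evalPoly_rename {ι₁ ι₂ : Type*} {B : Type*} [Ring B] [Algebra ℂ B] [Star B]
    (f : ι₁ → ι₂) (Q : StarPoly ι₁) (x : ι₂ → B) :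
    evalPoly (renameP f Q) x = evalPoly Q (x ∘ f) := by
  have key : (FreeAlgebra.lift ℂ (Sum.elim x fun i => star (x i))).comp (renameP f)
      = FreeAlgebra.lift ℂ (Sum.elim (x ∘ f) fun i => star ((x ∘ f) i)) := by
    apply FreeAlgebra.hom_ext
    funext v
    cases v <;> simp [renameP]
  exact DFunLike.congr_fun key Q


lemma limsup_nonneg_aux (f : ℕ → EReal) (hf : ∀ k, 0 ≤ f k) :
    0 ≤ Filter.limsup f Filter.atTop := by
  apply Filter.le_limsup_of_frequently_le'
  exact Filter.Frequently.of_forall hf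

/-- The inner term of `Ktop2sa` is always nonnegative. -/
lemma limsup_term_nonneg {ι κ : Type*} [Fintype ι] [Fintype κ] (x : ι → A) (y : κ → A)
    (R : ℝ) (ε : ℝ) {r : ℕ} (P : Fin r → StarPoly (ι ⊕ κ)) (ω : ℝ) :
    (0 : EReal) ≤ limsup (fun k : ℕ =>
        elog (o2 (GammaRel x y R k ε P) ω) * ((((k : ℝ) ^ 2)⁻¹ : ℝ) : EReal)) atTop :=
  limsup_nonneg_aux _ fun k => mul_nonneg (elog_nonneg _)
    (by exact_mod_cast inv_nonneg.mpr (sq_nonneg ((k : ℝ))))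

lemma Ktop2sa_nonneg {ι κ : Type*} [Fintype ι] [Fintype κ] (x : ι → A) (y : κ → A) :
    (0 : EReal) ≤ Ktop2sa x y := by
  have h1 : (0 : EReal) ≤ ⨅ (ε : ℝ) (_ : 0 < ε) (r : ℕ) (P : Fin r → StarPoly (ι ⊕ κ)),
      limsup (fun k : ℕ =>
        elog (o2 (GammaRel x y (1:ℝ) k ε P) (1:ℝ)) * ((((k : ℝ) ^ 2)⁻¹ : ℝ) : EReal)) atTop :=
    le_iInf fun ε => le_iInf fun _ => le_iInf fun r => le_iInf fun P =>
      limsup_term_nonneg x y 1 ε P 1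
  refine le_trans h1 ?_
  rw [Ktop2sa]
  refine le_iSup_of_le (1:ℝ) ?_
  refine le_iSup_of_le one_pos ?_
  refine le_iSup_of_le (1:ℝ) ?_
  exact le_iSup_of_le one_pos le_rfl


/-- Monotonicity of the topological orbit dimension under dropping variables that are
(duplicates of) variables already present in the "presence" tuple. -/
lemma Ktop2sa_le_of_rename {ι₁ ι₂ κ : Type*} [Fintype ι₁] [Fintype ι₂] [Fintype κ]
    (x₁ : ι₁ → A) (x₂ : ι₂ → A) (y : κ → A)
    (e : ι₁ → ι₂) (he : Function.Injective e) (f : ι₂ ⊕ κ → ι₁ ⊕ κ)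
    (hfe : ∀ i : ι₁, f (Sum.inl (e i)) = Sum.inl i)
    (hxf : Sum.elim x₁ y ∘ f = Sum.elim x₂ y) :
    Ktop2sa x₁ y ≤ Ktop2sa x₂ y := by
  classical
  rw [Ktop2sa, Ktop2sa]
  apply iSup_le; intro ω; apply iSup_le; intro hω
  apply iSup_le; intro R; apply iSup_le; intro hR
  refine le_iSup_of_le (ω/2) (le_iSup_of_le (by positivity) (le_iSup_of_le R
    (le_iSup_of_le hR ?_)))
  apply le_iInf; intro ε; apply le_iInf; intro hε
  apply le_iInf; intro r; apply le_iInf; intro P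
  refine le_trans (iInf_le_of_le ε <| iInf_le_of_le hε <| iInf_le_of_le r <|
    iInf_le _ (fun j => renameP f (P j))) ?_
  apply Filter.limsup_le_limsup (Filter.Eventually.of_forall fun k => ?_)
  refine mul_le_mul_of_nonneg_right ?_
    (by exact_mod_cast inv_nonneg.mpr (sq_nonneg ((k:ℝ))))
  apply elog_mono
  have hsub : GammaRel x₁ y R k ε (fun j => renameP f (P j)) ⊆
      (fun T => T ∘ e) '' GammaRel x₂ y R k ε P := by
    rintro T' ⟨U, hU, rfl⟩
    refine ⟨(U ∘ f) ∘ Sum.inl, ⟨U ∘ f, ?_, rfl⟩, ?_⟩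
    · refine ⟨fun v => hU.1 (f v), fun v => hU.2.1 (f v), fun jj => ?_⟩
      have h1 : evalPoly (P jj) (U ∘ f) = evalPoly (renameP f (P jj)) U :=
        (evalPoly_rename f (P jj) U).symm
      have h2 : evalPoly (P jj) (Sum.elim x₂ y) =
          evalPoly (renameP f (P jj)) (Sum.elim x₁ y) := by
        rw [evalPoly_rename, hxf]
      show |opNorm (evalPoly (P jj) (U ∘ f)) - ‖evalPoly (P jj) (Sum.elim x₂ y)‖| ≤ ε
      rw [h1, h2]
      exact hU.2.2 jj
    · funext i
      show U (f (Sum.inl (e i))) = U (Sum.inl i)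
      rw [hfe i]
  have := o2_proj_le e he hsub (ω/2)
  rwa [add_halves] at this


end OrbitDim

open OrbitDim Set

/-- If `C*(x₁,…,x_{n+j})` is MF and
`K_top^{(2)}(x₁,…,xₙ : x₁,…,x_{n+j}) = 0`, then
`K_top^{(2)}(x₁,…,x_{n-1} : x₁,…,x_{n+j}) = 0`. -/
theorem stmt1 {A : Type*} [CStarAlgebra A] (n j : ℕ) (hn : 0 < n)
    (x : Fin (n + j) → A) (hx : ∀ i, IsSelfAdjoint (x i))
    (hMF : IsMFTuple x)
    (h : Ktop2sa (fun i : Fin n => x ⟨i.1, lt_of_lt_of_le i.isLt (Nat.le_add_right n j)⟩) x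
        = 0) :
    Ktop2sa (fun i : Fin (n - 1) => x ⟨i.1, lt_of_lt_of_le i.isLt (by omega)⟩) x = 0 := by
  set x' : Fin (n - 1) → A := fun i => x ⟨i.1, lt_of_lt_of_le i.isLt (by omega)⟩ with hx'
  set x'' : Fin n → A :=
    fun i => x ⟨i.1, lt_of_lt_of_le i.isLt (Nat.le_add_right n j)⟩ with hx''
  set e : Fin (n - 1) → Fin n := fun i => ⟨i.1, by omega⟩ with he'
  have he : Function.Injective e := by
    intro a b hab
    have h2 : (e a).1 = (e b).1 := congrArg Fin.val hab
    exact Fin.ext h2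
  set f : Fin n ⊕ Fin (n + j) → Fin (n - 1) ⊕ Fin (n + j) := fun v =>
    match v with
    | Sum.inl i =>
        if hlt : (i : ℕ) < n - 1 then Sum.inl ⟨i.1, hlt⟩
        else Sum.inr ⟨i.1, lt_of_lt_of_le i.isLt (Nat.le_add_right n j)⟩
    | Sum.inr l => Sum.inr l with hf
  have hfe : ∀ i : Fin (n - 1), f (Sum.inl (e i)) = Sum.inl i := by
    intro i
    have : ((e i : Fin n) : ℕ) < n - 1 := i.isLt
    simp only [hf, dif_pos this]
    rfl
  have hxf : Sum.elim x' x ∘ f = Sum.elim x'' x := by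
    funext v
    cases v with
    | inl i =>
      show Sum.elim x' x (f (Sum.inl i)) = x'' i
      by_cases hlt : (i : ℕ) < n - 1
      · simp only [hf, dif_pos hlt]
        rfl
      · simp only [hf, dif_neg hlt]
        rfl
    | inr l => rfl
  exact le_antisymm ((Ktop2sa_le_of_rename x' x'' x e he f hfe hxf).trans h.le)
    (Ktop2sa_nonneg _ _)
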